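/- Fix ρ with 0 < |ρ| < 1, c > 0, and let W, Z be independent standard normal random variables. For γ ∈ ℝ define T'(ρ,γ) = (√(1−ρ²)·W + ρZ)·1{|Z+γ| > c} + (W − ργ/√(1−ρ²))·1{|Z+γ| ≤ c}. Then T'(ρ,γ) has the same distribution as −T'(−ρ,γ), and T'(ρ,γ) has the same distribution as T'(−ρ,−γ). -/

import Mathlib

open MeasureTheory ProbabilityTheory

noncomputable def Tstat (ρ c γ : ℝ) (p : ℝ × ℝ) : ℝ :=
  if c < |p.2 + γ| then Real.sqrt (1 - ρ ^ 2) * p.1 + ρ * p.2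
  else p.1 - ρ * γ / Real.sqrt (1 - ρ ^ 2)

noncomputable def stdNormal2 : Measure (ℝ × ℝ) :=
  (gaussianReal 0 1).prod (gaussianReal 0 1)

lemma gauss_neg : Measure.map (fun x : ℝ => -x) (gaussianReal 0 1) = gaussianReal 0 1 := by
  have h := gaussianReal_map_const_mul (μ := 0) (v := 1) (-1)
  simp only [neg_one_mul] at h
  rw [h]
  norm_num

lemma Tstat_meas (ρ c γ : ℝ) : Measurable (Tstat ρ c γ) := by
  unfold Tstat
  apply Measurable.ite
  · exact measurableSet_lt measurable_const ((measurable_snd.add_const γ).abs)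
  · exact (measurable_fst.const_mul _).add (measurable_snd.const_mul ρ)
  · exact measurable_fst.sub measurable_const

lemma negfst_inv : Measure.map (fun p : ℝ × ℝ => (-p.1, p.2)) stdNormal2 = stdNormal2 := by
  have : (fun p : ℝ × ℝ => (-p.1, p.2)) = Prod.map (fun x : ℝ => -x) (id : ℝ → ℝ) := rfl
  rw [stdNormal2, this, ← Measure.map_prod_map _ _ measurable_neg measurable_id, gauss_neg,
    Measure.map_id]

lemma negsnd_inv : Measure.map (fun p : ℝ × ℝ => (p.1, -p.2)) stdNormal2 = stdNormal2 := by
  have : (fun p : ℝ × ℝ => (p.1, -p.2)) = Prod.map (id : ℝ → ℝ) (fun x : ℝ => -x) := rfl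
  rw [stdNormal2, this, ← Measure.map_prod_map _ _ measurable_id measurable_neg, gauss_neg,
    Measure.map_id]

theorem stmt_8 (ρ c γ : ℝ) (hρ0 : ρ ≠ 0) (hρ1 : |ρ| < 1) (hc : 0 < c) :
    Measure.map (Tstat ρ c γ) stdNormal2 =
        Measure.map (fun p => -(Tstat (-ρ) c γ p)) stdNormal2 ∧
      Measure.map (Tstat ρ c γ) stdNormal2 = Measure.map (Tstat (-ρ) c (-γ)) stdNormal2 := by
  constructor
  · have h1 : (fun p : ℝ × ℝ => -(Tstat (-ρ) c γ p)) =
        Tstat ρ c γ ∘ (fun p : ℝ × ℝ => (-p.1, p.2)) := by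
      funext p
      simp only [Tstat, Function.comp, neg_sq]
      split_ifs with h
      · ring
      · ring
    rw [h1, ← Measure.map_map (f := fun p : ℝ × ℝ => (-p.1, p.2)) (Tstat_meas ρ c γ)
        (measurable_fst.neg.prodMk measurable_snd), negfst_inv]
  · have h2 : Tstat (-ρ) c (-γ) ∘ (fun p : ℝ × ℝ => (p.1, -p.2)) = Tstat ρ c γ := by
      funext p
      simp only [Tstat, Function.comp, neg_sq]
      rw [show -p.2 + -γ = -(p.2 + γ) by ring, abs_neg]
      split_ifs with h
      · ring
      · ring
    rw [← h2, ← Measure.map_map (f := fun p : ℝ × ℝ => (p.1, -p.2)) (Tstat_meas (-ρ) c (-γ))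
        (measurable_fst.prodMk measurable_snd.neg), negsnd_inv]
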